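/- Let q, n, d be positive integers and w_0, ..., w_{q−1} nonnegative integers with w_0 + ··· + w_{q−1} = n. If nd − n² + Σ w_i² > 0, then any constant composition code of length n over a q-ary alphabet with composition [w_0,...,w_{q−1}] and minimum Hamming distance d has size at most nd / (nd − n² + Σ w_i²). -/

import Mathlib

open Finset

/-- The Luo–Fu–Vinck–Chen bound for constant composition codes: if
`nd - n² + Σ wᵢ² > 0`, then any `q`-ary constant composition code of length `n`,
composition `[w₀, ..., w_{q-1}]` and minimum distance `d` has size at most
`nd / (nd - n² + Σ wᵢ²)`. -/
theorem ccc_bound (q n d : ℕ) (hq : 0 < q) (hn : 0 < n) (hd : 0 < d)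
    (w : Fin q → ℕ) (hw : ∑ i, w i = n)
    (C : Finset (Fin n → Fin q))
    (hcomp : ∀ c ∈ C, ∀ i : Fin q,
      (Finset.univ.filter fun j => c j = i).card = w i)
    (hdist : ∀ c ∈ C, ∀ c' ∈ C, c ≠ c' → d ≤ hammingDist c c')
    (hpos : (0 : ℝ) < n * d - n ^ 2 + ∑ i, (w i : ℝ) ^ 2) :
    (C.card : ℝ) ≤ n * d / (n * d - n ^ 2 + ∑ i, (w i : ℝ) ^ 2) := by
  classical
  set M := C.card with hM
  rcases Nat.eq_zero_or_pos M with hM0 | hM0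
  · rw [hM0]
    push_cast
    positivity
  -- column counts
  set k : Fin n → Fin q → ℕ := fun j i => (C.filter fun c => c j = i).card with hk
  -- total agreement count
  set T : ℕ := ∑ j, ∑ i, (k j i) ^ 2 with hT
  -- distance + agreement = n per pair
  have hpair : ∀ c ∈ C, ∀ c' ∈ C,
      hammingDist c c' + (univ.filter fun j => c j = c' j).card = n := by
    intro c _ c' _
    have h := Finset.card_filter_add_card_filter_not
      (s := (univ : Finset (Fin n))) (p := fun j => c j = c' j)
    simp only [Finset.card_univ, Fintype.card_fin] at h
    rw [add_comm]
    simpa [hammingDist] using h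
  -- agreement double count
  have hagree : ∀ j : Fin n,
      (∑ c ∈ C, ∑ c' ∈ C, if c j = c' j then 1 else 0) = ∑ i, (k j i) ^ 2 := by
    intro j
    have hsplit : ∀ c c' : Fin n → Fin q,
        (if c j = c' j then (1:ℕ) else 0)
          = ∑ i, (if c j = i then 1 else 0) * (if c' j = i then 1 else 0) := by
      intro c c'
      rw [Finset.sum_eq_single (c j)]
      · simp [eq_comm]
      · intro b _ hb
        simp [Ne.symm hb]
      · simp
    calc (∑ c ∈ C, ∑ c' ∈ C, if c j = c' j then (1:ℕ) else 0)
        = ∑ c ∈ C, ∑ c' ∈ C, ∑ i,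
            (if c j = i then 1 else 0) * (if c' j = i then 1 else 0) := by
          refine Finset.sum_congr rfl fun c _ => Finset.sum_congr rfl fun c' _ => ?_
          exact hsplit c c'
      _ = ∑ c ∈ C, ∑ i, ∑ c' ∈ C,
            (if c j = i then 1 else 0) * (if c' j = i then 1 else 0) :=
          Finset.sum_congr rfl fun c _ => Finset.sum_comm
      _ = ∑ i, ∑ c ∈ C, ∑ c' ∈ C,
            (if c j = i then 1 else 0) * (if c' j = i then 1 else 0) :=
          Finset.sum_comm
      _ = ∑ i, (∑ c ∈ C, if c j = i then 1 else 0) *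
            (∑ c' ∈ C, if c' j = i then 1 else 0) := by
          refine Finset.sum_congr rfl fun i _ => ?_
          rw [Finset.sum_mul_sum]
      _ = ∑ i, (k j i) ^ 2 := by
          refine Finset.sum_congr rfl fun i _ => ?_
          rw [hk, sq]
          simp only []
          rw [Finset.card_filter]
  -- row sums
  have hrow : ∀ i : Fin q, (∑ j, k j i) = M * w i := by
    intro i
    calc (∑ j, k j i) = ∑ j, ∑ c ∈ C, if c j = i then 1 else 0 := by
          refine Finset.sum_congr rfl fun j _ => ?_
          rw [hk]
          simp only []
          rw [Finset.card_filter]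
      _ = ∑ c ∈ C, ∑ j, if c j = i then 1 else 0 := Finset.sum_comm
      _ = ∑ c ∈ C, (univ.filter fun j => c j = i).card := by
          refine Finset.sum_congr rfl fun c _ => ?_
          rw [Finset.card_filter]
      _ = ∑ c ∈ C, w i := Finset.sum_congr rfl fun c hc => hcomp c hc i
      _ = M * w i := by rw [Finset.sum_const, smul_eq_mul]
  -- total: sum of distances + T = M^2 n
  have htotal : (∑ c ∈ C, ∑ c' ∈ C, hammingDist c c') + T = M * M * n := by
    have h1 : ∑ c ∈ C, ∑ c' ∈ C,
        (hammingDist c c' + (univ.filter fun j => c j = c' j).card) = M * M * n := by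
      rw [Finset.sum_congr rfl fun c hc => Finset.sum_congr rfl fun c' hc' =>
        hpair c hc c' hc']
      simp [mul_assoc]
      rfl
    have h2 : ∑ c ∈ C, ∑ c' ∈ C, (univ.filter fun j => c j = c' j).card = T := by
      rw [hT]
      calc ∑ c ∈ C, ∑ c' ∈ C, (univ.filter fun j => c j = c' j).card
          = ∑ c ∈ C, ∑ c' ∈ C, ∑ j, if c j = c' j then 1 else 0 := by
            refine Finset.sum_congr rfl fun c _ => Finset.sum_congr rfl fun c' _ => ?_
            rw [Finset.card_filter]
        _ = ∑ c ∈ C, ∑ j, ∑ c' ∈ C, (if c j = c' j then 1 else 0) :=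
            Finset.sum_congr rfl fun c _ => Finset.sum_comm
        _ = ∑ j, ∑ c ∈ C, ∑ c' ∈ C, (if c j = c' j then 1 else 0) :=
            Finset.sum_comm
        _ = ∑ j, ∑ i, (k j i) ^ 2 := Finset.sum_congr rfl fun j _ => hagree j
    rw [← h1, ← h2, ← Finset.sum_add_distrib]
    refine Finset.sum_congr rfl fun c _ => ?_
    rw [← Finset.sum_add_distrib]
  -- lower bound on distances
  have hlow : M * (M - 1) * d ≤ ∑ c ∈ C, ∑ c' ∈ C, hammingDist c c' := by
    calc M * (M - 1) * d = ∑ _c ∈ C, (M - 1) * d := by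
          rw [Finset.sum_const, smul_eq_mul, ← mul_assoc]
      _ ≤ ∑ c ∈ C, ∑ c' ∈ C, hammingDist c c' := by
          refine Finset.sum_le_sum fun c hc => ?_
          have herase : ∑ c' ∈ C, hammingDist c c'
              = ∑ c' ∈ C.erase c, hammingDist c c' := by
            rw [← Finset.add_sum_erase _ _ hc, hammingDist_self, zero_add]
          rw [herase]
          have hcard : (C.erase c).card = M - 1 := by
            rw [Finset.card_erase_of_mem hc]
          calc (M - 1) * d = (C.erase c).card * d := by rw [hcard]
            _ = ∑ _c' ∈ C.erase c, d := by rw [Finset.sum_const, smul_eq_mul]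
            _ ≤ ∑ c' ∈ C.erase c, hammingDist c c' := by
                refine Finset.sum_le_sum fun c' hc' => ?_
                exact hdist c hc c' (Finset.mem_of_mem_erase hc')
                  (Ne.symm (Finset.ne_of_mem_erase hc'))
  -- key nat inequality
  have hkey : M * (M - 1) * d + T ≤ M * M * n := by omega
  -- Cauchy-Schwarz in ℝ
  set S : ℝ := ∑ i, (w i : ℝ) ^ 2 with hS
  have hcs : (M : ℝ) ^ 2 * S ≤ (n : ℝ) * T := by
    have hCSi : ∀ i : Fin q, ((M : ℝ) * w i) ^ 2 ≤ (n : ℝ) * ∑ j, (k j i : ℝ) ^ 2 := by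
      intro i
      have h := sq_sum_le_card_mul_sum_sq (s := (univ : Finset (Fin n)))
        (f := fun j => (k j i : ℝ))
      have hrow' : (∑ j, (k j i : ℝ)) = (M : ℝ) * w i := by
        exact_mod_cast congrArg (Nat.cast : ℕ → ℝ) (hrow i)
      rw [hrow'] at h
      simpa using h
    calc (M : ℝ) ^ 2 * S = ∑ i, ((M : ℝ) * w i) ^ 2 := by
          rw [hS, Finset.mul_sum]
          refine Finset.sum_congr rfl fun i _ => ?_
          ring
      _ ≤ ∑ i, (n : ℝ) * ∑ j, (k j i : ℝ) ^ 2 := Finset.sum_le_sum fun i _ => hCSi i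
      _ = (n : ℝ) * T := by
          rw [← Finset.mul_sum, hT]
          push_cast
          rw [Finset.sum_comm]
  -- cast hkey to ℝ
  have hkey' : (M : ℝ) * ((M : ℝ) - 1) * d + (T : ℝ) ≤ (M : ℝ) * M * n := by
    have h := (Nat.cast_le (α := ℝ)).2 hkey
    push_cast [Nat.cast_sub hM0] at h
    exact_mod_cast h
  have hMpos : (0 : ℝ) < M := by exact_mod_cast hM0
  rw [le_div_iff₀ hpos]
  nlinarith [mul_le_mul_of_nonneg_left hkey' (by positivity : (0:ℝ) ≤ (n:ℝ)), hcs,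
    hMpos, mul_pos hMpos hMpos]
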